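/- arXiv:2112.13329 — 2 statements merged into one kernel-verified Lean document; each statement's English description precedes it below -/
import Mathlib

section
/- The cluster 𝒳-mutation preserves the log-canonical Poisson structure: if {X_i, X_j} = ε_{ij} X_i X_j for all i, j ∈ I, then the mutated variables X'_k = X_k⁻¹ and X'_i = X_i(1 + X_k^{−sgn(ε_{ik})})^{−ε_{ik}} (i ≠ k) satisfy {X'_i, X'_j} = ε'_{ij} X'_i X'_j, where ε' = μ_k(ε). -/
section helpers
variable {F : Type*} [Field F] [CharZero F]

theorem pz1 (P : F → F → F) (hleib : ∀ f g h, P f (g * h) = P f g * h + g * P f h)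
    (f : F) : P f 1 = 0 := by
  have h := hleib f 1 1
  simp only [mul_one, one_mul] at h
  exact (left_eq_add.mp h)

theorem pdiag (P : F → F → F) (hanti : ∀ f g, P f g = -P g f) (f : F) : P f f = 0 := by
  have h := hanti f f
  have h2 : (2 : F) * P f f = 0 := by rw [two_mul]; linear_combination h
  rcases mul_eq_zero.mp h2 with h' | h'
  · exact absurd h' two_ne_zero
  · exact h'

theorem pml (P : F → F → F) (hanti : ∀ f g, P f g = -P g f)
    (hleib : ∀ f g h, P f (g * h) = P f g * h + g * P f h)
    (f g h : F) : P (g * h) f = P g f * h + g * P h f := by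
  rw [hanti, hleib, hanti f g, hanti f h]; ring

theorem pinv (P : F → F → F) (hleib : ∀ f g h, P f (g * h) = P f g * h + g * P f h)
    (f g : F) (hg : g ≠ 0) : P f g⁻¹ = -(g⁻¹ * g⁻¹) * P f g := by
  have h := hleib f g g⁻¹
  rw [mul_inv_cancel₀ hg] at h
  rw [pz1 P hleib f] at h
  have hc : g * g⁻¹ = 1 := mul_inv_cancel₀ hg
  linear_combination (-g⁻¹) * h - (P f g⁻¹) * hc

theorem pzpow (P : F → F → F) (hleib : ∀ f g h, P f (g * h) = P f g * h + g * P f h)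
    (f g : F) (hg : g ≠ 0) (n : ℤ) :
    P f (g ^ n) = (n : F) * (g ^ (n - 1) * P f g) := by
  induction n using Int.induction_on with
  | zero => simp [pz1 P hleib f]
  | succ m ih =>
    rw [zpow_add_one₀ hg, hleib, ih]
    have h1 : g ^ ((m : ℤ) - 1) * g = g ^ (m : ℤ) := by
      rw [← zpow_add_one₀ hg, sub_add_cancel]
    have h2 : ((m : ℤ) + 1 - 1 : ℤ) = (m : ℤ) := by ring
    rw [h2]
    push_cast
    linear_combination (m : F) * P f g * h1
  | pred m ih =>
    have ha : g ^ (-(m : ℤ) - 1) = g ^ (-(m : ℤ)) * g⁻¹ := zpow_sub_one₀ hg _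
    have hb : g ^ (-(m : ℤ) - 1 - 1) = g ^ (-(m : ℤ)) * g⁻¹ * g⁻¹ := by
      rw [zpow_sub_one₀ hg, ha]
    rw [ha, hb, hleib, ih, ha, pinv P hleib f g hg]
    push_cast
    ring

/-- bracket of `x⁻¹` with a mutated variable -/
theorem aux1 (P : F → F → F)
    (hadd₂ : ∀ f g h, P f (g + h) = P f g + P f h)
    (hanti : ∀ f g, P f g = -P g f)
    (hleib : ∀ f g h, P f (g * h) = P f g * h + g * P f h)
    (x Xj : F) (f τ : ℤ) (hx : x ≠ 0) (hv : (1 : F) + x ^ τ ≠ 0)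
    (b2 : P Xj x = (f : F) * (Xj * x)) (bxx : P x x = 0) :
    P x⁻¹ (Xj * (1 + x ^ τ) ^ (-f)) = (f : F) * (x⁻¹ * (Xj * (1 + x ^ τ) ^ (-f))) := by
  have pxv : P x (1 + x ^ τ) = 0 := by
    rw [hadd₂, pz1 P hleib, pzpow P hleib x x hx τ, bxx]; ring
  have pxV : P x ((1 + x ^ τ) ^ (-f)) = 0 := by
    rw [pzpow P hleib x _ hv (-f), pxv]; ring
  have pVx : P ((1 + x ^ τ) ^ (-f)) x = 0 := by rw [hanti, pxV, neg_zero]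
  have pVxi : P ((1 + x ^ τ) ^ (-f)) x⁻¹ = 0 := by
    rw [pinv P hleib _ _ hx, pVx]; ring
  have pxiV : P x⁻¹ ((1 + x ^ τ) ^ (-f)) = 0 := by rw [hanti, pVxi, neg_zero]
  have pYxi : P Xj x⁻¹ = -(x⁻¹ * x⁻¹) * ((f : F) * (Xj * x)) := by
    rw [pinv P hleib _ _ hx, b2]
  have pxiY : P x⁻¹ Xj = -(-(x⁻¹ * x⁻¹) * ((f : F) * (Xj * x))) := by
    rw [hanti, pYxi]
  rw [hleib, pxiY, pxiV]
  have hc : x * x⁻¹ = 1 := mul_inv_cancel₀ hx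
  linear_combination ((f : F) * Xj * x⁻¹ * (1 + x ^ τ) ^ (-f)) * hc

/-- generic expansion of the bracket of two mutated variables -/
theorem aux2 (P : F → F → F)
    (hadd₂ : ∀ f g h, P f (g + h) = P f g + P f h)
    (hanti : ∀ f g, P f g = -P g f)
    (hleib : ∀ f g h, P f (g * h) = P f g * h + g * P f h)
    (x Xi Xj : F) (e f c σ τ : ℤ) (hx : x ≠ 0)
    (hu : (1 : F) + x ^ σ ≠ 0) (hv : (1 : F) + x ^ τ ≠ 0)
    (b0 : P Xi Xj = (c : F) * (Xi * Xj))
    (b1 : P Xi x = (e : F) * (Xi * x))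
    (b2 : P Xj x = (f : F) * (Xj * x))
    (bxx : P x x = 0) :
    P (Xi * (1 + x ^ σ) ^ (-e)) (Xj * (1 + x ^ τ) ^ (-f)) =
      (c : F) * (Xi * Xj) * ((1 + x ^ τ) ^ (-f) * (1 + x ^ σ) ^ (-e))
      - (e : F) * (f : F) * (τ : F) *
        (Xi * Xj * x ^ τ * ((1 + x ^ τ) ^ (-f) * (1 + x ^ τ)⁻¹ * (1 + x ^ σ) ^ (-e)))
      + (e : F) * (f : F) * (σ : F) *
        (Xi * Xj * x ^ σ * ((1 + x ^ σ) ^ (-e) * (1 + x ^ σ)⁻¹ * (1 + x ^ τ) ^ (-f))) := by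
  have hxs : ∀ s : ℤ, x ^ (s - 1) * x = x ^ s := fun s => by
    rw [← zpow_add_one₀ hx, sub_add_cancel]
  have pXv : P Xi (1 + x ^ τ) = (e : F) * (τ : F) * (Xi * x ^ τ) := by
    rw [hadd₂, pz1 P hleib, pzpow P hleib Xi x hx τ, b1]
    linear_combination (τ : F) * (e : F) * Xi * hxs τ
  have pXV : P Xi ((1 + x ^ τ) ^ (-f)) =
      -((e : F) * (f : F) * (τ : F)) * (Xi * x ^ τ * ((1 + x ^ τ) ^ (-f) * (1 + x ^ τ)⁻¹)) := by
    rw [pzpow P hleib Xi _ hv (-f), zpow_sub_one₀ hv, pXv]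
    push_cast; ring
  have pYu : P Xj (1 + x ^ σ) = (f : F) * (σ : F) * (Xj * x ^ σ) := by
    rw [hadd₂, pz1 P hleib, pzpow P hleib Xj x hx σ, b2]
    linear_combination (σ : F) * (f : F) * Xj * hxs σ
  have pYU : P Xj ((1 + x ^ σ) ^ (-e)) =
      -((f : F) * (e : F) * (σ : F)) * (Xj * x ^ σ * ((1 + x ^ σ) ^ (-e) * (1 + x ^ σ)⁻¹)) := by
    rw [pzpow P hleib Xj _ hu (-e), zpow_sub_one₀ hu, pYu]
    push_cast; ring
  have pUY : P ((1 + x ^ σ) ^ (-e)) Xj = -P Xj ((1 + x ^ σ) ^ (-e)) := hanti _ _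
  have pxv : P x (1 + x ^ τ) = 0 := by
    rw [hadd₂, pz1 P hleib, pzpow P hleib x x hx τ, bxx]; ring
  have pxV : P x ((1 + x ^ τ) ^ (-f)) = 0 := by
    rw [pzpow P hleib x _ hv (-f), pxv]; ring
  have pVx : P ((1 + x ^ τ) ^ (-f)) x = 0 := by rw [hanti, pxV, neg_zero]
  have pVxs : P ((1 + x ^ τ) ^ (-f)) (x ^ σ) = 0 := by
    rw [pzpow P hleib _ x hx σ, pVx]; ring
  have pVu : P ((1 + x ^ τ) ^ (-f)) (1 + x ^ σ) = 0 := by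
    rw [hadd₂, pz1 P hleib, pVxs]; ring
  have pVU : P ((1 + x ^ τ) ^ (-f)) ((1 + x ^ σ) ^ (-e)) = 0 := by
    rw [pzpow P hleib _ _ hu (-e), pVu]; ring
  have pUV : P ((1 + x ^ σ) ^ (-e)) ((1 + x ^ τ) ^ (-f)) = 0 := by
    rw [hanti, pVU, neg_zero]
  rw [pml P hanti hleib (Xj * (1 + x ^ τ) ^ (-f)) Xi ((1 + x ^ σ) ^ (-e)),
      hleib Xi Xj ((1 + x ^ τ) ^ (-f)), hleib ((1 + x ^ σ) ^ (-e)) Xj ((1 + x ^ τ) ^ (-f)),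
      b0, pXV, pUY, pYU, pUV]
  push_cast; ring

end helpers

set_option maxHeartbeats 1600000 in
/-- The cluster `𝒳`-mutation preserves the log-canonical Poisson structure: if
`{X_i, X_j} = ε_{ij} X_i X_j`, then the mutated variables `X'_k = X_k⁻¹`,
`X'_i = X_i (1 + X_k^{−sgn ε_{ik}})^{−ε_{ik}}` (for `i ≠ k`) satisfy
`{X'_i, X'_j} = ε'_{ij} X'_i X'_j`, where `ε' = μ_k(ε)`. -/
theorem stmt11 {I : Type*} [Fintype I] [DecidableEq I]
    (ε ε' : I → I → ℤ) (k : I)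
    (hskew : ∀ i j, ε i j = -ε j i)
    (hε' : ∀ i j, (ε' i j : ℚ) = if k = i ∨ k = j then -(ε i j : ℚ)
      else (ε i j : ℚ) +
        (1 / 2) * ((ε i k : ℚ) * |(ε k j : ℚ)| + |(ε i k : ℚ)| * (ε k j : ℚ)))
    (X X' : I → FractionRing (MvPolynomial I ℚ))
    (hX : ∀ i, X i =
      algebraMap (MvPolynomial I ℚ) (FractionRing (MvPolynomial I ℚ))
        (MvPolynomial.X i))
    (hX' : ∀ i, X' i = if i = k then (X k)⁻¹
      else X i * (1 + X k ^ (-(ε i k).sign)) ^ (-(ε i k)))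
    (P : FractionRing (MvPolynomial I ℚ) → FractionRing (MvPolynomial I ℚ) →
      FractionRing (MvPolynomial I ℚ))
    (hadd₁ : ∀ f g h, P (f + g) h = P f h + P g h)
    (hadd₂ : ∀ f g h, P f (g + h) = P f g + P f h)
    (hanti : ∀ f g, P f g = -P g f)
    (hleib : ∀ f g h, P f (g * h) = P f g * h + g * P f h)
    (hbase : ∀ i j, P (X i) (X j) = ε i j • (X i * X j)) :
    ∀ i j, P (X' i) (X' j) = ε' i j • (X' i * X' j) := by
  have hx : X k ≠ 0 := by
    rw [hX k, ne_eq, IsFractionRing.to_map_eq_zero_iff]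
    exact MvPolynomial.X_ne_zero k
  have h1x : (1 : FractionRing (MvPolynomial I ℚ)) + X k ≠ 0 := by
    rw [hX k]
    intro h
    have h2 : algebraMap (MvPolynomial I ℚ) (FractionRing (MvPolynomial I ℚ))
        (1 + MvPolynomial.X k) = 0 := by rw [map_add, map_one, h]
    rw [IsFractionRing.to_map_eq_zero_iff] at h2
    have := congrArg MvPolynomial.constantCoeff h2
    simp at this
  have h1xi : (1 : FractionRing (MvPolynomial I ℚ)) + (X k)⁻¹ ≠ 0 := by
    have heq : (1 : FractionRing (MvPolynomial I ℚ)) + (X k)⁻¹ = (X k)⁻¹ * (X k + 1) := by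
      field_simp
    rw [heq]
    exact mul_ne_zero (inv_ne_zero hx) (by rwa [add_comm] at h1x)
  have hsgn : ∀ m : ℤ, m.sign = -1 ∨ m.sign = 0 ∨ m.sign = 1 := by
    intro m
    rcases m with (_ | n) | n <;> simp [Int.sign]
  have hnz : ∀ s : ℤ, (s = -1 ∨ s = 0 ∨ s = 1) →
      (1 : FractionRing (MvPolynomial I ℚ)) + X k ^ s ≠ 0 := by
    rintro s (rfl | rfl | rfl)
    · simpa [zpow_neg_one] using h1xi
    · norm_num
    · simpa using h1x
  have hmem : ∀ m : ℤ, (-(m.sign) = -1 ∨ -(m.sign) = 0 ∨ -(m.sign) = 1) := by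
    intro m
    rcases hsgn m with h | h | h <;> rw [h] <;> norm_num
  have bm : ∀ a b, P (X a) (X b) =
      ((ε a b : ℤ) : FractionRing (MvPolynomial I ℚ)) * (X a * X b) := by
    intro a b; rw [hbase, zsmul_eq_mul]
  have bxx : P (X k) (X k) = 0 := pdiag P hanti _
  -- the case i = k, j ≠ k
  have main1 : ∀ b, b ≠ k → P (X' k) (X' b) = ε' k b • (X' k * X' b) := by
    intro b hb
    rw [hX' k, if_pos rfl, hX' b, if_neg hb, zsmul_eq_mul]
    have key := aux1 P hadd₂ hanti hleib (X k) (X b) (ε b k) (-(ε b k).sign) hx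
      (hnz _ (hmem _)) (bm b k) bxx
    rw [key]
    have hq : ((ε' k b : ℤ) : ℚ) = ((ε b k : ℤ) : ℚ) := by
      rw [hε' k b, if_pos (Or.inl rfl), hskew k b]; push_cast; ring
    have hd : ε' k b = ε b k := by exact_mod_cast hq
    rw [hd]
  intro i j
  by_cases hik : i = k
  · rw [hik]
    by_cases hjk : j = k
    · rw [hjk]
      have h0 : ε k k = 0 := by have := hskew k k; omega
      have hq : ((ε' k k : ℤ) : ℚ) = ((0 : ℤ) : ℚ) := by
        rw [hε' k k, if_pos (Or.inl rfl : k = k ∨ k = k), h0]; norm_num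
      have hd : ε' k k = 0 := by exact_mod_cast hq
      rw [hd, zero_smul, hX' k, if_pos rfl]
      exact pdiag P hanti _
    · exact main1 j hjk
  · by_cases hjk : j = k
    · rw [hjk]
      rw [hanti, main1 i hik]
      have hq : ((ε' i k : ℤ) : ℚ) = -((ε' k i : ℤ) : ℚ) := by
        rw [hε' i k, hε' k i, if_pos (Or.inr rfl : k = i ∨ k = k),
          if_pos (Or.inl rfl : k = k ∨ k = i), hskew i k]
        push_cast; ring
      have hsk : ε' i k = -ε' k i := by exact_mod_cast hq
      rw [hsk, neg_smul, neg_inj, mul_comm (X' k) (X' i)]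
    · -- main case : i ≠ k, j ≠ k
      rw [hX' i, if_neg hik, hX' j, if_neg hjk, zsmul_eq_mul]
      have key := aux2 P hadd₂ hanti hleib (X k) (X i) (X j) (ε i k) (ε j k) (ε i j)
        (-(ε i k).sign) (-(ε j k).sign) hx (hnz _ (hmem _)) (hnz _ (hmem _))
        (bm i j) (bm i k) (bm j k) bxx
      rw [key]
      have hcond : ¬(k = i ∨ k = j) := by
        push_neg; exact ⟨fun h => hik h.symm, fun h => hjk h.symm⟩
      have hq0 : (ε' i j : ℚ) = (ε i j : ℚ) +
          1 / 2 * ((ε i k : ℚ) * |(ε k j : ℚ)| + |(ε i k : ℚ)| * (ε k j : ℚ)) := by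
        rw [hε' i j, if_neg hcond]
      have hkj : ε k j = -ε j k := hskew k j
      have hid : (X k) * ((1 : FractionRing (MvPolynomial I ℚ)) + X k)⁻¹ +
          (X k)⁻¹ * ((1 : FractionRing (MvPolynomial I ℚ)) + (X k)⁻¹)⁻¹ = 1 := by
        have h2 : (1 : FractionRing (MvPolynomial I ℚ)) + (X k)⁻¹ = (X k)⁻¹ * (X k + 1) := by
          field_simp
        rw [h2, mul_inv, inv_inv]
        have h3 : X k + 1 ≠ 0 := by rwa [add_comm] at h1x
        field_simp
        ring
      rcases lt_trichotomy (ε i k) 0 with he | he | he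
      · rcases lt_trichotomy (ε j k) 0 with hf | hf | hf
        · -- e < 0, f < 0 : σ = τ = 1
          have hd : ε' i j = ε i j := by
            have h1 : (ε' i j : ℚ) = ((ε i j : ℤ) : ℚ) := by
              rw [hq0, hkj]; push_cast
              rw [abs_of_neg (show ((ε i k : ℤ) : ℚ) < 0 by exact_mod_cast he),
                abs_neg, abs_of_neg (show ((ε j k : ℤ) : ℚ) < 0 by exact_mod_cast hf)]
              ring
            exact_mod_cast h1
          rw [hd, Int.sign_eq_neg_one_of_neg he, Int.sign_eq_neg_one_of_neg hf]
          simp only [neg_neg, zpow_one]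
          push_cast
          ring
        · -- e < 0, f = 0
          have hd : ε' i j = ε i j := by
            have h1 : (ε' i j : ℚ) = ((ε i j : ℤ) : ℚ) := by
              rw [hq0, hkj, hf]; push_cast; simp
            exact_mod_cast h1
          rw [hd, hf]
          simp only [Int.sign_zero, neg_zero, zpow_zero, Int.cast_zero]
          push_cast
          ring
        · -- e < 0, f > 0 : σ = 1, τ = -1, d = c + e f
          have hd : ε' i j = ε i j + ε i k * ε j k := by
            have h1 : (ε' i j : ℚ) = ((ε i j + ε i k * ε j k : ℤ) : ℚ) := by
              rw [hq0, hkj]; push_cast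
              rw [abs_of_neg (show ((ε i k : ℤ) : ℚ) < 0 by exact_mod_cast he),
                abs_neg, abs_of_pos (show (0 : ℚ) < ((ε j k : ℤ) : ℚ) by exact_mod_cast hf)]
              ring
            exact_mod_cast h1
          rw [hd, Int.sign_eq_neg_one_of_neg he, Int.sign_eq_one_of_pos hf]
          simp only [neg_neg, zpow_one, zpow_neg_one]
          push_cast
          linear_combination ((ε i k : FractionRing (MvPolynomial I ℚ)) *
            (ε j k : FractionRing (MvPolynomial I ℚ)) * (X i * X j *
            ((1 + X k) ^ (-ε i k)) * ((1 + (X k)⁻¹) ^ (-ε j k)))) * hid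
      · -- e = 0
        have hd : ε' i j = ε i j := by
          have h1 : (ε' i j : ℚ) = ((ε i j : ℤ) : ℚ) := by
            rw [hq0, he]; push_cast; simp
          exact_mod_cast h1
        rw [hd, he]
        simp only [Int.sign_zero, neg_zero, zpow_zero, Int.cast_zero]
        push_cast
        ring
      · rcases lt_trichotomy (ε j k) 0 with hf | hf | hf
        · -- e > 0, f < 0 : σ = -1, τ = 1, d = c - e f
          have hd : ε' i j = ε i j - ε i k * ε j k := by
            have h1 : (ε' i j : ℚ) = ((ε i j - ε i k * ε j k : ℤ) : ℚ) := by
              rw [hq0, hkj]; push_cast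
              rw [abs_of_pos (show (0 : ℚ) < ((ε i k : ℤ) : ℚ) by exact_mod_cast he),
                abs_neg, abs_of_neg (show ((ε j k : ℤ) : ℚ) < 0 by exact_mod_cast hf)]
              ring
            exact_mod_cast h1
          rw [hd, Int.sign_eq_one_of_pos he, Int.sign_eq_neg_one_of_neg hf]
          simp only [neg_neg, zpow_one, zpow_neg_one]
          push_cast
          linear_combination (-(ε i k : FractionRing (MvPolynomial I ℚ)) *
            (ε j k : FractionRing (MvPolynomial I ℚ)) * (X i * X j *
            ((1 + (X k)⁻¹) ^ (-ε i k)) * ((1 + X k) ^ (-ε j k)))) * hid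
        · -- e > 0, f = 0
          have hd : ε' i j = ε i j := by
            have h1 : (ε' i j : ℚ) = ((ε i j : ℤ) : ℚ) := by
              rw [hq0, hkj, hf]; push_cast; simp
            exact_mod_cast h1
          rw [hd, hf]
          simp only [Int.sign_zero, neg_zero, zpow_zero, Int.cast_zero]
          push_cast
          ring
        · -- e > 0, f > 0 : σ = τ = -1
          have hd : ε' i j = ε i j := by
            have h1 : (ε' i j : ℚ) = ((ε i j : ℤ) : ℚ) := by
              rw [hq0, hkj]; push_cast
              rw [abs_of_pos (show (0 : ℚ) < ((ε i k : ℤ) : ℚ) by exact_mod_cast he),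
                abs_neg, abs_of_pos (show (0 : ℚ) < ((ε j k : ℤ) : ℚ) by exact_mod_cast hf)]
              ring
            exact_mod_cast h1
          rw [hd, Int.sign_eq_one_of_pos he, Int.sign_eq_one_of_pos hf]
          simp only [zpow_neg_one]
          push_cast
          ring
end

section
/- In the quantum torus with relations X̂_i X̂_j = q^{2ε_{ij}} X̂_j X̂_i, the elements Y_k := X̂_k⁻¹ and Y_i := q^{−ε_{ik}[ε_{ik}]_+} X̂_i X̂_k^{[ε_{ik}]_+} (for i ≠ k) satisfy the mutated quantum torus relations Y_i Y_j = q^{2ε'_{ij}} Y_j Y_i for all i, j ∈ I, where ε' = μ_k(ε). -/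
section QT
variable {G : Type*} [Group G] (q : G)

theorem qt_qmul (e f : ℤ) (t : G) : q ^ e * (q ^ f * t) = q ^ (e + f) * t := by
  rw [← mul_assoc, ← zpow_add]

theorem qt_central (hq : ∀ u : G, q * u = u * q) (m : ℤ) (u : G) : q ^ m * u = u * q ^ m :=
  (Commute.zpow_left (hq u) m)

theorem qt_qmove (hq : ∀ u : G, q * u = u * q) (e : ℤ) (u t : G) : u * (q ^ e * t) = q ^ e * (u * t) := by
  rw [← mul_assoc, ← qt_central q hq, mul_assoc]

theorem qt_aux1 (hq : ∀ u : G, q * u = u * q) (a b : G) (c : ℤ) (h : a * b = q ^ c * (b * a)) :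
    ∀ n : ℤ, a * b ^ n = q ^ (c * n) * (b ^ n * a) := by
  have h2 : b * a = q ^ (-c) * (a * b) := by
    rw [h, qt_qmul]; simp
  have h' : a * b⁻¹ = q ^ (-c) * (b⁻¹ * a) := by
    calc a * b⁻¹ = b⁻¹ * ((b * a) * b⁻¹) := by group
    _ = b⁻¹ * ((q ^ (-c) * (a * b)) * b⁻¹) := by rw [← h2]
    _ = b⁻¹ * (q ^ (-c) * ((a * b) * b⁻¹)) := by rw [mul_assoc]
    _ = q ^ (-c) * (b⁻¹ * ((a * b) * b⁻¹)) := by rw [qt_qmove q hq]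
    _ = q ^ (-c) * (b⁻¹ * a) := by rw [show b⁻¹ * ((a * b) * b⁻¹) = b⁻¹ * a by group]
  intro n
  induction n using Int.induction_on with
  | zero => simp
  | succ n ih =>
    calc a * b ^ ((n : ℤ) + 1) = (a * b ^ (n : ℤ)) * b := by
          rw [zpow_add_one, mul_assoc]
    _ = (q ^ (c * n) * (b ^ (n : ℤ) * a)) * b := by rw [ih]
    _ = q ^ (c * n) * (b ^ (n : ℤ) * (a * b)) := by rw [mul_assoc, mul_assoc]
    _ = q ^ (c * n) * (b ^ (n : ℤ) * (q ^ c * (b * a))) := by rw [h]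
    _ = q ^ (c * n) * (q ^ c * (b ^ (n : ℤ) * (b * a))) := by rw [qt_qmove q hq]
    _ = q ^ (c * ((n : ℤ) + 1)) * (b ^ ((n : ℤ) + 1) * a) := by
          rw [qt_qmul, ← mul_assoc (b ^ (n : ℤ)), ← zpow_add_one,
            show c * (n : ℤ) + c = c * ((n : ℤ) + 1) from by ring]
  | pred n ih =>
    calc a * b ^ (-(n : ℤ) - 1) = (a * b ^ (-(n : ℤ))) * b⁻¹ := by
          rw [zpow_sub_one, mul_assoc]
    _ = (q ^ (c * (-(n : ℤ))) * (b ^ (-(n : ℤ)) * a)) * b⁻¹ := by rw [ih]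
    _ = q ^ (c * (-(n : ℤ))) * (b ^ (-(n : ℤ)) * (a * b⁻¹)) := by rw [mul_assoc, mul_assoc]
    _ = q ^ (c * (-(n : ℤ))) * (b ^ (-(n : ℤ)) * (q ^ (-c) * (b⁻¹ * a))) := by rw [h']
    _ = q ^ (c * (-(n : ℤ))) * (q ^ (-c) * (b ^ (-(n : ℤ)) * (b⁻¹ * a))) := by rw [qt_qmove q hq]
    _ = q ^ (c * (-(n : ℤ) - 1)) * (b ^ (-(n : ℤ) - 1) * a) := by
          rw [qt_qmul, ← mul_assoc (b ^ (-(n : ℤ))), ← zpow_sub_one,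
            show c * (-(n : ℤ)) + -c = c * (-(n : ℤ) - 1) from by ring]

theorem qt_swap (hq : ∀ u : G, q * u = u * q) (a b : G) (c : ℤ) (h : a * b = q ^ c * (b * a)) (m n : ℤ) :
    a ^ m * b ^ n = q ^ (c * m * n) * (b ^ n * a ^ m) := by
  have h1 := qt_aux1 q hq a b c h n
  have h1' : b ^ n * a = q ^ (-(c * n)) * (a * b ^ n) := by
    rw [h1, qt_qmul]; simp
  have h2 := qt_aux1 q hq (b ^ n) a (-(c * n)) h1' m
  rw [h2, qt_qmul, show c * m * n + -(c * n) * m = 0 from by ring, zpow_zero, one_mul]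

theorem qt_swapT (hq : ∀ u : G, q * u = u * q) (a b : G) (c : ℤ) (h : a * b = q ^ c * (b * a)) (m n : ℤ) (t : G) :
    a ^ m * (b ^ n * t) = q ^ (c * m * n) * (b ^ n * (a ^ m * t)) := by
  rw [← mul_assoc, qt_swap q hq a b c h, mul_assoc, mul_assoc (b ^ n)]

theorem qt_conj (hq : ∀ u : G, q * u = u * q) {u v u' v' : G} {e1 e2 f : ℤ}
    (hu : u = q ^ e1 * u') (hv : v = q ^ e2 * v')
    (h : u' * v' = q ^ f * (v' * u')) : u * v = q ^ f * (v * u) := by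
  subst hu hv
  calc q ^ e1 * u' * (q ^ e2 * v') = q ^ e1 * (q ^ e2 * (u' * v')) := by
        rw [mul_assoc, qt_qmove q hq]
  _ = q ^ (e1 + e2 + f) * (v' * u') := by rw [qt_qmul, h, qt_qmul, add_assoc]
  _ = q ^ f * (q ^ e2 * v' * (q ^ e1 * u')) := by
        rw [mul_assoc (q ^ e2) v', qt_qmove q hq e1 v' u', qt_qmul q e2 e1,
          qt_qmul q f (e2 + e1), show f + (e2 + e1) = e1 + e2 + f from by ring]

end QT


/-- In the quantum torus with relations `X̂_i X̂_j = q^{2ε_{ij}} X̂_j X̂_i`, the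
elements `Y_k := X̂_k⁻¹` and `Y_i := q^{−ε_{ik}[ε_{ik}]_+} X̂_i X̂_k^{[ε_{ik}]_+}`
(for `i ≠ k`, with `[a]_+ = (a+|a|)/2 = max a 0`) satisfy the mutated quantum
torus relations `Y_i Y_j = q^{2ε'_{ij}} Y_j Y_i`, where `ε' = μ_k(ε)`. -/
theorem stmt13 {I : Type*} [Fintype I] [DecidableEq I] {A : Type*} [Ring A]
    (q : Aˣ) (hq : ∀ u : Aˣ, q * u = u * q)
    (ε ε' : I → I → ℤ) (k : I)
    (hskew : ∀ i j, ε i j = -ε j i)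
    (hε' : ∀ i j, (ε' i j : ℚ) = if k = i ∨ k = j then -(ε i j : ℚ)
      else (ε i j : ℚ) +
        (1 / 2) * ((ε i k : ℚ) * |(ε k j : ℚ)| + |(ε i k : ℚ)| * (ε k j : ℚ)))
    (X Y : I → Aˣ)
    (hrel : ∀ i j, X i * X j = q ^ (2 * ε i j) * (X j * X i))
    (hYk : Y k = (X k)⁻¹)
    (hY : ∀ i, i ≠ k →
      Y i = q ^ (-(ε i k * max (ε i k) 0)) * X i * X k ^ max (ε i k) 0) :
    ∀ i j, Y i * Y j = q ^ (2 * ε' i j) * (Y j * Y i) := by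
  have swT1 : ∀ a b (m : ℤ) (t : Aˣ), X a ^ m * (X b * t) =
      q ^ (2 * ε a b * m) * (X b * (X a ^ m * t)) := by
    intro a b m t
    have h := qt_swapT q hq (X a) (X b) _ (hrel a b) m 1 t
    simpa using h
  have sw11T : ∀ a b (t : Aˣ), X a * (X b * t) =
      q ^ (2 * ε a b) * (X b * (X a * t)) := by
    intro a b t
    have h := qt_swapT q hq (X a) (X b) _ (hrel a b) 1 1 t
    simpa using h
  have maxQ : ∀ a : ℤ, ((max a 0 : ℤ) : ℚ) = ((a : ℚ) + |(a : ℚ)|) / 2 := by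
    intro a
    rcases le_total a 0 with h | h
    · rw [max_eq_right h, abs_of_nonpos (by exact_mod_cast h)]
      ring
    · rw [max_eq_left h, abs_of_nonneg (by exact_mod_cast h)]
      ring
  intro i j
  by_cases hik : i = k
  · by_cases hjk : j = k
    · rw [hik, hjk]
      have h1 : ε k k = 0 := by have := hskew k k; omega
      have h0 : ε' k k = 0 := by
        have h2 := hε' k k
        rw [if_pos (Or.inl rfl), h1] at h2
        exact_mod_cast h2
      rw [h0]
      simp
    · rw [hik]
      have e' : ε' k j = -ε k j := by
        have h2 := hε' k j
        rw [if_pos (Or.inl rfl)] at h2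
        exact_mod_cast h2
      refine qt_conj q hq (e1 := 0) (e2 := -(ε j k * max (ε j k) 0))
        (u' := (X k)⁻¹) (v' := X j * X k ^ max (ε j k) 0) ?_ ?_ ?_
      · rw [hYk]; simp
      · rw [hY j hjk, mul_assoc]
      · calc (X k)⁻¹ * (X j * X k ^ max (ε j k) 0)
            = X k ^ (-1 : ℤ) * (X j * X k ^ max (ε j k) 0) := by rw [zpow_neg_one]
        _ = q ^ (2 * ε k j * (-1)) * (X j * (X k ^ (-1 : ℤ) * X k ^ max (ε j k) 0)) :=
            swT1 k j (-1) _
        _ = q ^ (2 * ε k j * (-1)) * (X j * X k ^ (-1 + max (ε j k) 0)) := by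
            rw [← zpow_add]
        _ = q ^ (2 * ε' k j) * (X j * X k ^ max (ε j k) 0 * (X k)⁻¹) := by
            rw [e', mul_assoc (X j) (X k ^ max (ε j k) 0), ← zpow_neg_one (X k),
              ← zpow_add,
              show max (ε j k) 0 + (-1 : ℤ) = -1 + max (ε j k) 0 from add_comm _ _,
              show 2 * -ε k j = 2 * ε k j * (-1) from by ring]
  · by_cases hjk : j = k
    · rw [hjk]
      have e' : ε' i k = -ε i k := by
        have h2 := hε' i k
        rw [if_pos (Or.inr rfl)] at h2
        exact_mod_cast h2
      have eki : ε k i = -ε i k := hskew k i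
      refine qt_conj q hq (e1 := -(ε i k * max (ε i k) 0)) (e2 := 0)
        (u' := X i * X k ^ max (ε i k) 0) (v' := (X k)⁻¹) ?_ ?_ ?_
      · rw [hY i hik, mul_assoc]
      · rw [hYk]; simp
      · calc X i * X k ^ max (ε i k) 0 * (X k)⁻¹
            = X i * (X k ^ max (ε i k) 0 * X k ^ (-1 : ℤ)) := by
              rw [mul_assoc, zpow_neg_one]
        _ = X i * X k ^ (max (ε i k) 0 + -1) := by rw [← zpow_add]
        _ = q ^ (2 * ε' i k) * ((X k)⁻¹ * (X i * X k ^ max (ε i k) 0)) := by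
            rw [e', ← zpow_neg_one (X k), swT1 k i (-1), ← zpow_add, qt_qmul,
              show 2 * -ε i k + 2 * ε k i * (-1) = 0 from by rw [eki]; ring,
              zpow_zero, one_mul,
              show (-1 : ℤ) + max (ε i k) 0 = max (ε i k) 0 + -1 from add_comm _ _]
    · have hnot : ¬(k = i ∨ k = j) := by
        push_neg
        exact ⟨fun h => hik h.symm, fun h => hjk h.symm⟩
      have key : 2 * ε' i j =
          2 * ε i j + 2 * max (ε i k) 0 * ε k j - 2 * max (ε j k) 0 * ε k i := by
        have h2 := hε' i j
        rw [if_neg hnot] at h2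
        have hki : (ε k i : ℚ) = -(ε i k : ℚ) := by exact_mod_cast hskew k i
        have hjk2 : (ε j k : ℚ) = -(ε k j : ℚ) := by exact_mod_cast hskew j k
        have h3 : ((2 * ε' i j : ℤ) : ℚ) =
            ((2 * ε i j + 2 * max (ε i k) 0 * ε k j - 2 * max (ε j k) 0 * ε k i : ℤ) : ℚ) := by
          push_cast [maxQ]
          rw [hki, hjk2, abs_neg]
          linear_combination 2 * h2
        exact_mod_cast h3
      refine qt_conj q hq (e1 := -(ε i k * max (ε i k) 0)) (e2 := -(ε j k * max (ε j k) 0))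
        (u' := X i * X k ^ max (ε i k) 0) (v' := X j * X k ^ max (ε j k) 0) ?_ ?_ ?_
      · rw [hY i hik, mul_assoc]
      · rw [hY j hjk, mul_assoc]
      · calc X i * X k ^ max (ε i k) 0 * (X j * X k ^ max (ε j k) 0)
            = X i * (X k ^ max (ε i k) 0 * (X j * X k ^ max (ε j k) 0)) := by
              rw [mul_assoc]
        _ = X i * (q ^ (2 * ε k j * max (ε i k) 0) *
              (X j * (X k ^ max (ε i k) 0 * X k ^ max (ε j k) 0))) := by
              rw [swT1 k j]
        _ = q ^ (2 * ε k j * max (ε i k) 0) *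
              (X i * (X j * X k ^ (max (ε i k) 0 + max (ε j k) 0))) := by
              rw [qt_qmove q hq, ← zpow_add]
        _ = q ^ (2 * ε k j * max (ε i k) 0) * (q ^ (2 * ε i j) *
              (X j * (X i * X k ^ (max (ε i k) 0 + max (ε j k) 0)))) := by
              rw [sw11T i j]
        _ = q ^ (2 * ε k j * max (ε i k) 0 + 2 * ε i j) *
              (X j * (X i * X k ^ (max (ε i k) 0 + max (ε j k) 0))) := by
              rw [qt_qmul]
        _ = q ^ (2 * ε' i j) * (X j * X k ^ max (ε j k) 0 * (X i * X k ^ max (ε i k) 0)) := by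
              rw [mul_assoc (X j) (X k ^ max (ε j k) 0), swT1 k i, qt_qmove q hq,
                qt_qmul, ← zpow_add,
                show max (ε j k) 0 + max (ε i k) 0 = max (ε i k) 0 + max (ε j k) 0
                  from add_comm _ _,
                show 2 * ε' i j + 2 * ε k i * max (ε j k) 0
                    = 2 * ε k j * max (ε i k) 0 + 2 * ε i j from by linarith [key]]
end
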